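/- CVaR is subadditive (hence convex as a functional): for integrable X, Y on the same probability space and β ∈ (0,1], CVaR_β(X + Y) ≤ CVaR_β(X) + CVaR_β(Y). -/

import Mathlib

open MeasureTheory

lemma cvar_bddBelow {Ω : Type*} [MeasurableSpace Ω] (μ : Measure Ω) [IsProbabilityMeasure μ]
    (Z : Ω → ℝ) (hZ : Integrable Z μ) (β : ℝ) (hβ : β ∈ Set.Ioc (0 : ℝ) 1) :
    BddBelow (Set.range fun κ : ℝ => κ + (1 / β) * ∫ ω, max (Z ω - κ) 0 ∂μ) := by
  obtain ⟨hβ0, hβ1⟩ := hβ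
  refine ⟨min (∫ ω, Z ω ∂μ) 0, ?_⟩
  rintro x ⟨κ, rfl⟩
  have hint : Integrable (fun ω => max (Z ω - κ) 0) μ :=
    (hZ.sub (integrable_const κ)).pos_part
  have hnn : 0 ≤ ∫ ω, max (Z ω - κ) 0 ∂μ :=
    integral_nonneg (fun ω => le_max_right _ _)
  rcases le_or_gt 0 κ with hκ | hκ
  · have : (0:ℝ) ≤ (1 / β) * ∫ ω, max (Z ω - κ) 0 ∂μ :=
      mul_nonneg (by positivity) hnn
    calc min (∫ ω, Z ω ∂μ) 0 ≤ 0 := min_le_right _ _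
      _ ≤ κ := hκ
      _ ≤ _ := le_add_of_nonneg_right this
  · have h1 : ∫ ω, Z ω - κ ∂μ ≤ ∫ ω, max (Z ω - κ) 0 ∂μ :=
      integral_mono (hZ.sub (integrable_const κ)) hint (fun ω => le_max_left _ _)
    have h2 : ∫ ω, Z ω - κ ∂μ = (∫ ω, Z ω ∂μ) - κ := by
      rw [integral_sub hZ (integrable_const κ), integral_const, probReal_univ]
      simp
    have hβinv : 1 ≤ 1 / β := by
      rw [le_div_iff₀ hβ0]; linarith
    have key : (∫ ω, Z ω ∂μ) - κ ≤ (1 / β) * ∫ ω, max (Z ω - κ) 0 ∂μ := by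
      calc (∫ ω, Z ω ∂μ) - κ ≤ ∫ ω, max (Z ω - κ) 0 ∂μ := h2 ▸ h1
        _ = 1 * ∫ ω, max (Z ω - κ) 0 ∂μ := (one_mul _).symm
        _ ≤ (1 / β) * ∫ ω, max (Z ω - κ) 0 ∂μ := mul_le_mul_of_nonneg_right hβinv hnn
    calc min (∫ ω, Z ω ∂μ) 0 ≤ ∫ ω, Z ω ∂μ := min_le_left _ _
      _ ≤ κ + (1 / β) * ∫ ω, max (Z ω - κ) 0 ∂μ := by linarith

/-- CVaR is subadditive: for integrable `X, Y` on the same probability space and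
`β ∈ (0,1]`, `CVaR_β(X + Y) ≤ CVaR_β(X) + CVaR_β(Y)`, where
`CVaR_β(Z) = inf_κ { κ + (1/β) E[(Z − κ)_+] }`. -/
theorem cvar_subadditive
    {Ω : Type*} [MeasurableSpace Ω] (μ : Measure Ω) [IsProbabilityMeasure μ]
    (X Y : Ω → ℝ) (hX : Integrable X μ) (hY : Integrable Y μ)
    (β : ℝ) (hβ : β ∈ Set.Ioc (0 : ℝ) 1) :
    (⨅ κ : ℝ, (κ + (1 / β) * ∫ ω, max ((X ω + Y ω) - κ) 0 ∂μ)) ≤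
      (⨅ κ : ℝ, (κ + (1 / β) * ∫ ω, max (X ω - κ) 0 ∂μ)) +
        (⨅ κ : ℝ, (κ + (1 / β) * ∫ ω, max (Y ω - κ) 0 ∂μ)) := by
  have hbdd := cvar_bddBelow μ (fun ω => X ω + Y ω) (hX.add hY) β hβ
  have hβ0 := hβ.1
  refine le_ciInf_add_ciInf fun κ1 κ2 => ?_
  have h1 : (⨅ κ : ℝ, (κ + (1 / β) * ∫ ω, max ((X ω + Y ω) - κ) 0 ∂μ)) ≤
      (κ1 + κ2) + (1 / β) * ∫ ω, max ((X ω + Y ω) - (κ1 + κ2)) 0 ∂μ :=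
    ciInf_le hbdd (κ1 + κ2)
  refine h1.trans ?_
  have hintX : Integrable (fun ω => max (X ω - κ1) 0) μ :=
    (hX.sub (integrable_const κ1)).pos_part
  have hintY : Integrable (fun ω => max (Y ω - κ2) 0) μ :=
    (hY.sub (integrable_const κ2)).pos_part
  have hmono : ∫ ω, max ((X ω + Y ω) - (κ1 + κ2)) 0 ∂μ ≤
      ∫ ω, (max (X ω - κ1) 0 + max (Y ω - κ2) 0) ∂μ := by
    refine integral_mono ((hX.add hY).sub (integrable_const _)).pos_part
      (hintX.add hintY) (fun ω => ?_)
    have : (X ω + Y ω) - (κ1 + κ2) = (X ω - κ1) + (Y ω - κ2) := by ring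
    rw [this]
    exact max_le (add_le_add (le_max_left _ _) (le_max_left _ _))
      (by positivity)
  rw [integral_add hintX hintY] at hmono
  have := mul_le_mul_of_nonneg_left hmono (by positivity : (0:ℝ) ≤ 1 / β)
  linarith [this]
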